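/- For d > 1 and 0 < λ < ∞, the truncated cavity operator T admits at least one fixed point in 𝔉, i.e. there exists a non-increasing function f : [-λ, λ] → [0, 1] such that for every x ∈ [-λ, λ], f(x) = exp(-d ∫_{-x}^{λ} (x+y)^{d-1} f(y) dy). -/

import Mathlib

open MeasureTheory Set

/-- The truncated cavity operator `T`. -/
noncomputable def T (d lam : ℝ) (f : ℝ → ℝ) : ℝ → ℝ :=
  fun x => Real.exp (-(d * ∫ y in (-x)..lam, (x + y) ^ (d - 1) * f y))

/-- Membership in the class 𝔉 of non-increasing `[0,1]`-valued functions on `[-λ, λ]`. -/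
def memF (lam : ℝ) (f : ℝ → ℝ) : Prop :=
  AntitoneOn f (Icc (-lam) lam) ∧ ∀ x ∈ Icc (-lam) lam, f x ∈ Icc (0 : ℝ) 1

namespace TCav

open Real Filter Topology

/-- globally antitone [0,1]-valued functions -/
def memG (f : ℝ → ℝ) : Prop := Antitone f ∧ ∀ x, f x ∈ Icc (0:ℝ) 1

/-- the kernel -/
noncomputable def ker (d x y : ℝ) : ℝ := if 0 < x + y then (x+y)^(d-1) else 0

/-- the linear integral operator -/
noncomputable def Kop (d lam : ℝ) (f : ℝ → ℝ) (x : ℝ) : ℝ :=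
  ∫ y in Icc (-lam) lam, ker d x y * f y

/-- entropy integrand -/
noncomputable def phi (a : ℝ) : ℝ := a * Real.log a - a

/-- the energy functional -/
noncomputable def En (d lam : ℝ) (f : ℝ → ℝ) : ℝ :=
  d/2 * (∫ x in Icc (-lam) lam, f x * Kop d lam f x) + ∫ x in Icc (-lam) lam, phi (f x)

section Lemmas

variable {d lam : ℝ}

lemma memG.meas {f : ℝ → ℝ} (hf : memG f) : Measurable f := hf.1.measurable

lemma memG.norm_le {f : ℝ → ℝ} (hf : memG f) (x : ℝ) : ‖f x‖ ≤ 1 := by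
  have := hf.2 x
  rw [Real.norm_eq_abs, abs_le]
  constructor <;> [linarith [this.1]; exact this.2]

lemma ker_nonneg (hd : 1 < d) (x y : ℝ) : 0 ≤ ker d x y := by
  unfold ker; split
  · exact Real.rpow_nonneg (by linarith) _
  · exact le_refl 0

lemma ker_symm (x y : ℝ) : ker d x y = ker d y x := by
  unfold ker; rw [add_comm]

lemma ker_mono (hd : 1 < d) (y : ℝ) : Monotone (fun x => ker d x y) := by
  intro x1 x2 h
  simp only [ker]
  split_ifs with h1 h2
  · exact Real.rpow_le_rpow (by linarith) (by linarith) (by linarith)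
  · exact absurd (by linarith : (0:ℝ) < x2 + y) h2
  · exact Real.rpow_nonneg (by linarith) _
  · exact le_refl 0

lemma ker_le (hd : 1 < d) (hlam : 0 < lam) {x y : ℝ} (hx : x ≤ lam) (hy : y ≤ lam) :
    ker d x y ≤ (2*lam)^(d-1) := by
  unfold ker; split_ifs with h1
  · exact Real.rpow_le_rpow (by linarith) (by linarith) (by linarith)
  · exact Real.rpow_nonneg (by linarith) _

lemma measurable_ker (hd : 1 < d) : Measurable (fun p : ℝ × ℝ => ker d p.1 p.2) := by
  unfold ker
  exact Measurable.ite (measurableSet_lt measurable_const (measurable_fst.add measurable_snd))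
    ((Real.continuous_rpow_const (by linarith : (0:ℝ) ≤ d - 1)).measurable.comp
      (measurable_fst.add measurable_snd)) measurable_const

lemma measurable_ker_right (hd : 1 < d) (x : ℝ) : Measurable (fun y => ker d x y) :=
  (measurable_ker hd).comp (measurable_const.prodMk measurable_id)

/-- workhorse: bounded a.e.-measurable functions on finite-measure sets are integrable -/
lemma intOn_of_bdd {f : ℝ → ℝ} {s : Set ℝ} (hs : MeasurableSet s) (hμ : volume s < ⊤)
    (hf : AEMeasurable f (volume.restrict s)) (C : ℝ) (hC : ∀ x ∈ s, ‖f x‖ ≤ C) :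
    IntegrableOn f s := by
  refine Integrable.mono' (g := fun _ => C) (integrableOn_const hμ.ne) hf.aestronglyMeasurable ?_
  exact (ae_restrict_mem hs).mono hC

lemma integrable_ker_mul (hd : 1 < d) {f : ℝ → ℝ} (hf : Measurable f)
    (hfb : ∀ y, ‖f y‖ ≤ 1) (x : ℝ) :
    IntegrableOn (fun y => ker d x y * f y) (Icc (-lam) lam) := by
  refine intOn_of_bdd measurableSet_Icc measure_Icc_lt_top
    (((measurable_ker_right hd x).mul hf).aemeasurable) (ker d x lam) (fun y hy => ?_)
  have h1 : ker d x y ≤ ker d x lam := by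
    rw [ker_symm x y, ker_symm x lam]
    exact ker_mono hd x hy.2
  have h0 : 0 ≤ ker d x y := ker_nonneg hd x y
  calc ‖ker d x y * f y‖ = ker d x y * ‖f y‖ := by
        rw [norm_mul, Real.norm_eq_abs (ker d x y), abs_of_nonneg h0]
    _ ≤ ker d x lam * 1 := by
        apply mul_le_mul h1 (hfb y) (norm_nonneg _) (le_trans h0 h1)
    _ = ker d x lam := mul_one _

lemma Kop_nonneg (hd : 1 < d) {f : ℝ → ℝ} (hf : ∀ y, 0 ≤ f y) (x : ℝ) :
    0 ≤ Kop d lam f x :=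
  setIntegral_nonneg measurableSet_Icc fun y _ => mul_nonneg (ker_nonneg hd x y) (hf y)

lemma Kop_le (hd : 1 < d) (hlam : 0 < lam) {f : ℝ → ℝ} (hf : Measurable f)
    (hfb : ∀ y, f y ∈ Icc (0:ℝ) 1) {x : ℝ} (hx : x ≤ lam) :
    Kop d lam f x ≤ (2*lam)^(d-1) * (2*lam) := by
  have hb : ∀ y, ‖f y‖ ≤ 1 := fun y => by
    have := hfb y; rw [Real.norm_eq_abs, abs_le]; exact ⟨by linarith [this.1], this.2⟩
  have h1 : Kop d lam f x ≤ ∫ _ in Icc (-lam) lam, (2*lam)^(d-1) := by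
    refine setIntegral_mono_on (integrable_ker_mul hd hf hb x)
      (integrableOn_const measure_Icc_lt_top.ne) measurableSet_Icc (fun y hy => ?_)
    calc ker d x y * f y ≤ ker d x y * 1 :=
          mul_le_mul_of_nonneg_left (hfb y).2 (ker_nonneg hd x y)
      _ = ker d x y := mul_one _
      _ ≤ (2*lam)^(d-1) := ker_le hd hlam hx hy.2
  refine h1.trans (le_of_eq ?_)
  rw [setIntegral_const, measureReal_def, Real.volume_Icc, smul_eq_mul]
  rw [ENNReal.toReal_ofReal (by linarith)]
  ring

lemma Kop_mono (hd : 1 < d) {f : ℝ → ℝ} (hf : Measurable f)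
    (hfb : ∀ y, f y ∈ Icc (0:ℝ) 1) : Monotone (Kop d lam f) := by
  have hb : ∀ y, ‖f y‖ ≤ 1 := fun y => by
    have := hfb y; rw [Real.norm_eq_abs, abs_le]; exact ⟨by linarith [this.1], this.2⟩
  intro x1 x2 h
  refine setIntegral_mono_on (integrable_ker_mul hd hf hb x1)
    (integrable_ker_mul hd hf hb x2) measurableSet_Icc (fun y _ => ?_)
  exact mul_le_mul_of_nonneg_right (ker_mono hd y h) (hfb y).1

lemma Kop_meas (hd : 1 < d) {f : ℝ → ℝ} (hf : Measurable f)
    (hfb : ∀ y, f y ∈ Icc (0:ℝ) 1) : Measurable (Kop d lam f) :=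
  (Kop_mono hd hf hfb).measurable

lemma norm_Kop_le (hd : 1 < d) (hlam : 0 < lam) {f : ℝ → ℝ} (hf : Measurable f)
    (hfb : ∀ y, ‖f y‖ ≤ 1) {x : ℝ} (hx : x ≤ lam) :
    ‖Kop d lam f x‖ ≤ (2*lam)^(d-1) * (2*lam) := by
  have h1 : ‖Kop d lam f x‖ ≤ ∫ y in Icc (-lam) lam, ‖ker d x y * f y‖ :=
    norm_integral_le_integral_norm _
  refine h1.trans ?_
  have h2 : (∫ y in Icc (-lam) lam, ‖ker d x y * f y‖) ≤ ∫ _ in Icc (-lam) lam, (2*lam)^(d-1) := by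
    refine setIntegral_mono_on (integrable_ker_mul hd hf hfb x).norm
      (integrableOn_const measure_Icc_lt_top.ne) measurableSet_Icc (fun y hy => ?_)
    calc ‖ker d x y * f y‖ = ker d x y * ‖f y‖ := by
          rw [norm_mul, Real.norm_eq_abs (ker d x y), abs_of_nonneg (ker_nonneg hd x y)]
      _ ≤ (2*lam)^(d-1) * 1 :=
          mul_le_mul (ker_le hd hlam hx hy.2) (hfb y) (norm_nonneg _)
            (Real.rpow_nonneg (by linarith) _)
      _ = (2*lam)^(d-1) := mul_one _
  refine h2.trans (le_of_eq ?_)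
  rw [setIntegral_const, measureReal_def, Real.volume_Icc, smul_eq_mul, ENNReal.toReal_ofReal (by linarith)]
  ring

lemma Kop_sub (hd : 1 < d) {f g : ℝ → ℝ} (hf : Measurable f) (hfb : ∀ y, ‖f y‖ ≤ 1)
    (hg : Measurable g) (hgb : ∀ y, ‖g y‖ ≤ 1) (x : ℝ) :
    Kop d lam (fun y => f y - g y) x = Kop d lam f x - Kop d lam g x := by
  unfold Kop
  rw [← integral_sub (integrable_ker_mul hd hf hfb x) (integrable_ker_mul hd hg hgb x)]
  congr 1; funext y; ring

lemma Kop_smul (hd : 1 < d) {f : ℝ → ℝ} (hf : Measurable f) (hfb : ∀ y, ‖f y‖ ≤ 1)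
    (t : ℝ) (x : ℝ) : Kop d lam (fun y => t * f y) x = t * Kop d lam f x := by
  unfold Kop
  rw [← integral_const_mul]
  congr 1; funext y; ring

lemma Kop_add (hd : 1 < d) {f g : ℝ → ℝ} (hf : Measurable f) (hfb : ∀ y, ‖f y‖ ≤ 1)
    (hg : Measurable g) (hgb : ∀ y, ‖g y‖ ≤ 1) (x : ℝ) :
    Kop d lam (fun y => f y + g y) x = Kop d lam f x + Kop d lam g x := by
  unfold Kop
  rw [← integral_add (integrable_ker_mul hd hf hfb x) (integrable_ker_mul hd hg hgb x)]
  congr 1; funext y; ring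

/-- Fubini symmetry -/
lemma Q_symm (hd : 1 < d) (hlam : 0 < lam) {u v : ℝ → ℝ}
    (hu : Measurable u) (hub : ∀ y, ‖u y‖ ≤ 1)
    (hv : Measurable v) (hvb : ∀ y, ‖v y‖ ≤ 1) :
    ∫ x in Icc (-lam) lam, u x * Kop d lam v x
      = ∫ x in Icc (-lam) lam, v x * Kop d lam u x := by
  haveI : IsFiniteMeasure (volume.restrict (Icc (-lam) lam)) :=
    ⟨by rw [Measure.restrict_apply_univ]; exact measure_Icc_lt_top⟩
  have hker : ∀ (a b : ℝ), a ∈ Icc (-lam) lam → b ∈ Icc (-lam) lam →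
      ‖ker d a b‖ ≤ (2*lam)^(d-1) := by
    intro a b ha hb
    rw [Real.norm_eq_abs, abs_of_nonneg (ker_nonneg hd a b)]
    exact ker_le hd hlam ha.2 hb.2
  have key : Integrable (Function.uncurry fun x y => u x * (ker d x y * v y))
      ((volume.restrict (Icc (-lam) lam)).prod (volume.restrict (Icc (-lam) lam))) := by
    refine Integrable.mono' (g := fun _ => (2*lam)^(d-1)) (integrable_const _)
      ((((hu.comp measurable_fst).mul
        ((measurable_ker hd).mul (hv.comp measurable_snd)))).aestronglyMeasurable) ?_
    rw [Measure.prod_restrict]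
    filter_upwards [ae_restrict_mem (measurableSet_Icc.prod measurableSet_Icc)] with p hp
    have h1 : ‖u p.1 * (ker d p.1 p.2 * v p.2)‖
        = ‖u p.1‖ * (‖ker d p.1 p.2‖ * ‖v p.2‖) := by
      simp [norm_mul]
    show ‖u p.1 * (ker d p.1 p.2 * v p.2)‖ ≤ (2*lam)^(d-1)
    rw [h1]
    calc ‖u p.1‖ * (‖ker d p.1 p.2‖ * ‖v p.2‖) ≤ 1 * ((2*lam)^(d-1) * 1) := by
          apply mul_le_mul (hub p.1) ?_ (by positivity) zero_le_one
          exact mul_le_mul (hker p.1 p.2 hp.1 hp.2) (hvb p.2) (norm_nonneg _)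
            (Real.rpow_nonneg (by linarith) _)
      _ = (2*lam)^(d-1) := by ring
  have e1 : ∀ (w z : ℝ → ℝ), (∀ y, ‖z y‖ ≤ 1) → ∀ x : ℝ,
      w x * Kop d lam z x = ∫ y in Icc (-lam) lam, w x * (ker d x y * z y) := by
    intro w z hzb x
    rw [integral_const_mul]
    rfl
  calc ∫ x in Icc (-lam) lam, u x * Kop d lam v x
      = ∫ x in Icc (-lam) lam, ∫ y in Icc (-lam) lam, u x * (ker d x y * v y) := by
        refine setIntegral_congr_fun measurableSet_Icc (fun x _ => e1 u v hvb x)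
    _ = ∫ y in Icc (-lam) lam, ∫ x in Icc (-lam) lam, u x * (ker d x y * v y) :=
        integral_integral_swap key
    _ = ∫ y in Icc (-lam) lam, v y * Kop d lam u y := by
        refine setIntegral_congr_fun measurableSet_Icc (fun y _ => ?_)
        rw [e1 v u hub y]
        congr 1; funext x
        rw [ker_symm x y]; ring

lemma phi_nonpos {a : ℝ} (ha : a ∈ Icc (0:ℝ) 1) : phi a ≤ 0 := by
  have h1 : Real.log a ≤ 0 := Real.log_nonpos ha.1 ha.2
  have := mul_nonpos_of_nonneg_of_nonpos ha.1 h1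
  unfold phi; linarith [ha.1]

lemma phi_ge {a : ℝ} (ha : a ∈ Icc (0:ℝ) 1) : -2 ≤ phi a := by
  unfold phi
  rcases eq_or_lt_of_le ha.1 with h | h
  · simp [← h]
  · have h1 : Real.log (1/a) ≤ 1/a - 1 := Real.log_le_sub_one_of_pos (by positivity)
    rw [Real.log_div one_ne_zero (ne_of_gt h), Real.log_one] at h1
    have h2 : a * (0 - Real.log a) ≤ a * (1/a - 1) :=
      mul_le_mul_of_nonneg_left (by linarith) ha.1
    have h3 : a * (1/a - 1) = 1 - a := by field_simp
    nlinarith [ha.2]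

lemma norm_phi_le {a : ℝ} (ha : a ∈ Icc (0:ℝ) 1) : ‖phi a‖ ≤ 2 := by
  have h1 := phi_nonpos ha; have h2 := phi_ge ha
  rw [Real.norm_eq_abs, abs_le]; constructor <;> linarith

lemma continuous_phi : Continuous phi :=
  Real.continuous_mul_log.sub continuous_id

lemma phi_convex {a b t : ℝ} (ha : a ∈ Icc (0:ℝ) 1) (hb : b ∈ Icc (0:ℝ) 1)
    (ht : t ∈ Icc (0:ℝ) 1) :
    phi (a + t * (b - a)) ≤ phi a + t * (phi b - phi a) := by
  have h := Real.convexOn_mul_log.2 (mem_Ici.2 ha.1) (mem_Ici.2 hb.1)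
    (by linarith [ht.2] : (0:ℝ) ≤ 1 - t) ht.1 (by ring)
  simp only [smul_eq_mul] at h
  have he : (1 - t) * a + t * b = a + t * (b - a) := by ring
  rw [he] at h
  unfold phi
  nlinarith [h]

/-- Helly-style selection lemma -/
lemma helly (F : ℕ → ℝ → ℝ) (hF : ∀ n, memG (F n)) :
    ∃ g, memG g ∧ ∃ σ : ℕ → ℕ, StrictMono σ ∧
      ∀ᵐ x : ℝ, Tendsto (fun n => F (σ n) x) atTop (𝓝 (g x)) := by
  haveI : CompactSpace (Icc (0:ℝ) 1) := isCompact_iff_compactSpace.mp isCompact_Icc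
  set GG : ℕ → (ℚ → Icc (0:ℝ) 1) := fun n q => ⟨F n q, (hF n).2 q⟩ with hGG
  obtain ⟨L, σ, hσ, hL⟩ := CompactSpace.tendsto_subseq GG
  set gh : ℚ → ℝ := fun q => (L q : ℝ) with hgh
  have hcoord : ∀ q : ℚ, Tendsto (fun n => F (σ n) q) atTop (𝓝 (gh q)) := by
    intro q
    have h1 : Tendsto (fun n => (GG ∘ σ) n q) atTop (𝓝 (L q)) := (tendsto_pi_nhds.1 hL) q
    exact (continuous_subtype_val.tendsto _).comp h1
  have ghmem : ∀ q, gh q ∈ Icc (0:ℝ) 1 := fun q => (L q).2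
  have ghanti : ∀ q r : ℚ, q ≤ r → gh r ≤ gh q := by
    intro q r hqr
    refine le_of_tendsto_of_tendsto' (hcoord r) (hcoord q) (fun n => ?_)
    exact (hF (σ n)).1 (by exact_mod_cast hqr)
  set g : ℝ → ℝ := fun x => sInf (gh '' {q : ℚ | (q:ℝ) < x}) with hgdef
  have hne : ∀ x : ℝ, (gh '' {q : ℚ | (q:ℝ) < x}).Nonempty := by
    intro x; obtain ⟨q, hq⟩ := exists_rat_lt x; exact ⟨gh q, ⟨q, hq, rfl⟩⟩
  have hbdd : ∀ x : ℝ, BddBelow (gh '' {q : ℚ | (q:ℝ) < x}) := by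
    intro x
    refine ⟨0, fun z hz => ?_⟩
    obtain ⟨q, _, rfl⟩ := hz; exact (ghmem q).1
  have hg0 : ∀ x, 0 ≤ g x := by
    intro x
    refine le_csInf (hne x) (fun z hz => ?_)
    obtain ⟨q, _, rfl⟩ := hz; exact (ghmem q).1
  have hg1 : ∀ x, g x ≤ 1 := by
    intro x
    obtain ⟨q, hq⟩ := exists_rat_lt x
    exact csInf_le_of_le (hbdd x) ⟨q, hq, rfl⟩ (ghmem q).2
  have ganti : Antitone g := by
    intro x1 x2 h
    exact csInf_le_csInf (hbdd x2) (hne x1)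
      (image_mono (fun q hq => lt_of_lt_of_le hq h))
  have hg_le : ∀ (x:ℝ) (q:ℚ), (q:ℝ) < x → g x ≤ gh q := fun x q hq =>
    csInf_le (hbdd x) ⟨q, hq, rfl⟩
  have hle_g : ∀ q : ℚ, gh q ≤ g q := by
    intro q
    refine le_csInf (hne q) (fun z hz => ?_)
    obtain ⟨r, hr, rfl⟩ := hz
    have : (r:ℝ) < (q:ℝ) := hr
    exact ghanti r q (by exact_mod_cast le_of_lt this)
  have hconv : ∀ x : ℝ, ContinuousAt g x → Tendsto (fun n => F (σ n) x) atTop (𝓝 (g x)) := by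
    intro x hc
    rw [Metric.tendsto_atTop]
    intro ε hε
    have hε3 : 0 < ε/3 := by linarith
    obtain ⟨δ, hδ0, hδ⟩ := Metric.continuousAt_iff.1 hc (ε/3) hε3
    obtain ⟨q, hq1, hq2⟩ := exists_rat_btwn (show x - δ < x by linarith)
    obtain ⟨r, hr1, hr2⟩ := exists_rat_btwn (show x < x + δ/2 by linarith)
    have hq3 : dist (q:ℝ) x < δ := by
      rw [Real.dist_eq, abs_lt]; constructor <;> linarith
    have hgq : gh q ≤ g x + ε/3 := by
      have h1 := hδ hq3
      have h2 := hle_g q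
      rw [Real.dist_eq, abs_lt] at h1
      linarith
    have hgr : g x - ε/3 ≤ gh r := by
      have hx'2 : dist ((r:ℝ) + δ/4) x < δ := by
        rw [Real.dist_eq, abs_lt]; constructor <;> linarith
      have h1 := hg_le ((r:ℝ) + δ/4) r (by linarith)
      have h2 := hδ hx'2
      rw [Real.dist_eq, abs_lt] at h2
      linarith
    obtain ⟨N1, hN1⟩ := (Metric.tendsto_atTop.1 (hcoord q)) (ε/3) hε3
    obtain ⟨N2, hN2⟩ := (Metric.tendsto_atTop.1 (hcoord r)) (ε/3) hε3
    refine ⟨max N1 N2, fun n hn => ?_⟩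
    have h5 := hN1 n (le_trans (le_max_left _ _) hn)
    have h6 := hN2 n (le_trans (le_max_right _ _) hn)
    rw [Real.dist_eq, abs_lt] at h5 h6 ⊢
    have hxq : F (σ n) x ≤ F (σ n) q := (hF (σ n)).1 (le_of_lt hq2)
    have hxr : F (σ n) r ≤ F (σ n) x := (hF (σ n)).1 (le_of_lt hr1)
    constructor <;> [linarith; linarith]
  refine ⟨g, ⟨ganti, fun x => ⟨hg0 x, hg1 x⟩⟩, σ, hσ, ?_⟩
  have hcnt : {x : ℝ | ¬ContinuousAt g x}.Countable := ganti.countable_not_continuousAt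
  have hnull : volume {x : ℝ | ¬ContinuousAt g x} = 0 := hcnt.measure_zero _
  rw [ae_iff]
  refine measure_mono_null (fun x hx => ?_) hnull
  simp only [mem_setOf_eq] at hx ⊢
  exact fun hcont => hx (hconv x hcont)

/-- continuity of energy along a.e. convergent sequences -/
lemma En_tendsto (hd : 1 < d) (hlam : 0 < lam) {F : ℕ → ℝ → ℝ} {g : ℝ → ℝ}
    (hF : ∀ n, memG (F n)) (hg : memG g)
    (hconv : ∀ᵐ x : ℝ, Tendsto (fun n => F n x) atTop (𝓝 (g x))) :
    Tendsto (fun n => En d lam (F n)) atTop (𝓝 (En d lam g)) := by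
  have hnorm : ∀ n y, ‖F n y‖ ≤ 1 := fun n => (hF n).norm_le
  have hKconv : ∀ x : ℝ, Tendsto (fun n => Kop d lam (F n) x) atTop (𝓝 (Kop d lam g x)) := by
    intro x
    refine tendsto_integral_of_dominated_convergence (fun _ => ker d x lam)
      (fun n => (((measurable_ker_right hd x).mul (hF n).meas)).aestronglyMeasurable)
      (integrableOn_const measure_Icc_lt_top.ne) (fun n => ?_) ?_
    · filter_upwards [ae_restrict_mem measurableSet_Icc] with y hy
      have h1 : ker d x y ≤ ker d x lam := by
        rw [ker_symm x y, ker_symm x lam]; exact ker_mono hd x hy.2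
      have h0 := ker_nonneg hd x y
      calc ‖ker d x y * F n y‖ = ker d x y * ‖F n y‖ := by
            rw [norm_mul, Real.norm_eq_abs (ker d x y), abs_of_nonneg h0]
        _ ≤ ker d x lam * 1 := mul_le_mul h1 (hnorm n y) (norm_nonneg _) (h0.trans h1)
        _ = ker d x lam := mul_one _
    · refine (ae_restrict_of_ae hconv).mono (fun y hy => ?_)
      exact hy.const_mul _
  have hQ : Tendsto (fun n => ∫ x in Icc (-lam) lam, F n x * Kop d lam (F n) x) atTop
      (𝓝 (∫ x in Icc (-lam) lam, g x * Kop d lam g x)) := by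
    refine tendsto_integral_of_dominated_convergence (fun _ => (2*lam)^(d-1) * (2*lam))
      (fun n => ((hF n).meas.mul (Kop_meas hd (hF n).meas (hF n).2)).aestronglyMeasurable)
      (integrableOn_const measure_Icc_lt_top.ne) (fun n => ?_) ?_
    · filter_upwards [ae_restrict_mem measurableSet_Icc] with x hx
      calc ‖F n x * Kop d lam (F n) x‖ = ‖F n x‖ * ‖Kop d lam (F n) x‖ := norm_mul _ _
        _ ≤ 1 * ((2*lam)^(d-1) * (2*lam)) :=
            mul_le_mul (hnorm n x)
              (norm_Kop_le hd hlam (hF n).meas (fun y => hnorm n y) hx.2)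
              (norm_nonneg _) zero_le_one
        _ = (2*lam)^(d-1) * (2*lam) := one_mul _
    · refine (ae_restrict_of_ae hconv).mono (fun x hx => ?_)
      exact hx.mul (hKconv x)
  have hS : Tendsto (fun n => ∫ x in Icc (-lam) lam, phi (F n x)) atTop
      (𝓝 (∫ x in Icc (-lam) lam, phi (g x))) := by
    refine tendsto_integral_of_dominated_convergence (fun _ => 2)
      (fun n => (continuous_phi.measurable.comp (hF n).meas).aestronglyMeasurable)
      (integrableOn_const measure_Icc_lt_top.ne) (fun n => ?_) ?_
    · exact Eventually.of_forall (fun x => norm_phi_le ((hF n).2 x))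
    · refine (ae_restrict_of_ae hconv).mono (fun x hx => ?_)
      exact (continuous_phi.tendsto _).comp hx
  exact (hQ.const_mul (d/2)).add hS

/-- existence of a minimizer of the energy -/
lemma exists_min (hd : 1 < d) (hlam : 0 < lam) :
    ∃ f0, memG f0 ∧ ∀ g, memG g → En d lam f0 ≤ En d lam g := by
  set S := En d lam '' {f | memG f} with hS
  have hSne : S.Nonempty :=
    ⟨En d lam (fun _ => 0), ⟨fun _ => 0,
      ⟨fun _ _ _ => le_refl 0, fun _ => ⟨le_refl 0, zero_le_one⟩⟩, rfl⟩⟩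
  have hlow : ∀ f, memG f → -(4*lam) ≤ En d lam f := by
    intro f hf
    have h1 : 0 ≤ ∫ x in Icc (-lam) lam, f x * Kop d lam f x :=
      setIntegral_nonneg measurableSet_Icc
        (fun x _ => mul_nonneg (hf.2 x).1 (Kop_nonneg hd (fun y => (hf.2 y).1) x))
    have h2 : (∫ _ in Icc (-lam) lam, (-2 : ℝ)) ≤ ∫ x in Icc (-lam) lam, phi (f x) := by
      refine setIntegral_mono_on (integrableOn_const measure_Icc_lt_top.ne)
        (intOn_of_bdd measurableSet_Icc measure_Icc_lt_top
          ((continuous_phi.measurable.comp hf.meas).aemeasurable) 2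
          (fun x _ => norm_phi_le (hf.2 x))) measurableSet_Icc (fun x _ => phi_ge (hf.2 x))
    rw [setIntegral_const, measureReal_def, Real.volume_Icc, smul_eq_mul,
      ENNReal.toReal_ofReal (by linarith)] at h2
    have h3 : (lam - -lam) * (-2) = -(4*lam) := by ring
    rw [h3] at h2
    have hd2 : (0:ℝ) ≤ d/2 := by linarith
    unfold En
    nlinarith [mul_nonneg hd2 h1]
  have hbdd : BddBelow S := ⟨-(4*lam), fun z hz => by
    obtain ⟨f, hf, rfl⟩ := hz; exact hlow f hf⟩
  obtain ⟨u, humono, hulim, humem⟩ := exists_seq_tendsto_sInf hSne hbdd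
  have hchoice : ∀ n, ∃ f, memG f ∧ En d lam f = u n := by
    intro n; obtain ⟨f, hf, he⟩ := humem n; exact ⟨f, hf, he⟩
  choose Fs hFmem hFval using hchoice
  obtain ⟨g, hgmem, σ, hσ, hae⟩ := helly Fs hFmem
  have h1 : Tendsto (fun n => En d lam (Fs (σ n))) atTop (𝓝 (En d lam g)) :=
    En_tendsto hd hlam (fun n => hFmem (σ n)) hgmem hae
  have h2 : Tendsto (fun n => En d lam (Fs (σ n))) atTop (𝓝 (sInf S)) := by
    have he : (fun n => En d lam (Fs (σ n))) = u ∘ σ := by funext n; exact hFval (σ n)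
    rw [he]
    exact hulim.comp hσ.tendsto_atTop
  have heq : En d lam g = sInf S := tendsto_nhds_unique h1 h2
  exact ⟨g, hgmem, fun f hf => heq ▸ csInf_le hbdd ⟨f, hf, rfl⟩⟩

/-- main Euler-Lagrange conclusion: the minimizer satisfies f0 = exp(-d·K f0) a.e. on I -/
lemma el (hd : 1 < d) (hlam : 0 < lam) {f0 : ℝ → ℝ} (hf0 : memG f0)
    (hmin : ∀ g, memG g → En d lam f0 ≤ En d lam g) :
    ∀ᵐ x ∂(volume.restrict (Icc (-lam) lam)),
      f0 x = Real.exp (-(d * Kop d lam f0 x)) := by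
  have hd0 : (0:ℝ) < d := by linarith
  have hf0m := hf0.meas
  have hf0b := hf0.2
  have hf0n : ∀ y, ‖f0 y‖ ≤ 1 := hf0.norm_le
  set h : ℝ → ℝ := fun x => Real.exp (-(d * Kop d lam f0 x)) with hh
  have hKmono := Kop_mono (d := d) (lam := lam) hd hf0m hf0b
  have hK0 : ∀ x, 0 ≤ Kop d lam f0 x := Kop_nonneg hd (fun y => (hf0b y).1)
  have hmemh : memG h := by
    constructor
    · intro x1 x2 hx
      exact Real.exp_le_exp.2 (neg_le_neg (mul_le_mul_of_nonneg_left (hKmono hx) hd0.le))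
    · intro x
      refine ⟨(Real.exp_pos _).le, ?_⟩
      calc Real.exp (-(d * Kop d lam f0 x)) ≤ Real.exp 0 :=
            Real.exp_le_exp.2 (by nlinarith [hK0 x])
        _ = 1 := Real.exp_zero
  have hhm := hmemh.meas
  have hhb := hmemh.2
  have hhn : ∀ y, ‖h y‖ ≤ 1 := hmemh.norm_le
  set Δ : ℝ → ℝ := fun x => h x - f0 x with hΔ
  have hΔm : Measurable Δ := hhm.sub hf0m
  have hΔn : ∀ y, ‖Δ y‖ ≤ 1 := by
    intro y
    have h1 := (hhb y).1; have h2 := (hhb y).2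
    have h3 := (hf0b y).1; have h4 := (hf0b y).2
    rw [Real.norm_eq_abs, abs_le]
    constructor <;> simp only [hΔ] <;> linarith
  have hKΔeq : ∀ x, Kop d lam Δ x = Kop d lam h x - Kop d lam f0 x := by
    intro x
    rw [hΔ]
    exact Kop_sub hd hhm hhn hf0m hf0n x
  have hKΔm : Measurable (fun x => Kop d lam Δ x) := by
    have he : (fun x => Kop d lam Δ x) = fun x => Kop d lam h x - Kop d lam f0 x :=
      funext hKΔeq
    rw [he]
    exact (Kop_meas hd hhm hhb).sub (Kop_meas hd hf0m hf0b)
  have hKΔn : ∀ x ∈ Icc (-lam) lam, ‖Kop d lam Δ x‖ ≤ (2*lam)^(d-1)*(2*lam) := fun x hx =>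
    norm_Kop_le hd hlam hΔm hΔn hx.2
  have hint : ∀ (u : ℝ → ℝ), Measurable u → (∀ y, ‖u y‖ ≤ 1) → ∀ (K' : ℝ → ℝ), Measurable K' →
      (∀ x ∈ Icc (-lam) lam, ‖K' x‖ ≤ (2*lam)^(d-1)*(2*lam)) →
      IntegrableOn (fun x => u x * K' x) (Icc (-lam) lam) := by
    intro u hu hub K' hK' hK'b
    refine intOn_of_bdd measurableSet_Icc measure_Icc_lt_top ((hu.mul hK').aemeasurable)
      ((2*lam)^(d-1)*(2*lam)) (fun x hx => ?_)
    calc ‖u x * K' x‖ = ‖u x‖ * ‖K' x‖ := norm_mul _ _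
      _ ≤ 1 * ((2*lam)^(d-1)*(2*lam)) :=
          mul_le_mul (hub x) (hK'b x hx) (norm_nonneg _) zero_le_one
      _ = (2*lam)^(d-1)*(2*lam) := one_mul _
  have hKf0n : ∀ x ∈ Icc (-lam) lam, ‖Kop d lam f0 x‖ ≤ (2*lam)^(d-1)*(2*lam) := fun x hx =>
    norm_Kop_le hd hlam hf0m hf0n hx.2
  have hi1 : IntegrableOn (fun x => f0 x * Kop d lam f0 x) (Icc (-lam) lam) :=
    hint f0 hf0m hf0n _ (Kop_meas hd hf0m hf0b) hKf0n
  have hi2 : IntegrableOn (fun x => Δ x * Kop d lam f0 x) (Icc (-lam) lam) :=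
    hint Δ hΔm hΔn _ (Kop_meas hd hf0m hf0b) hKf0n
  have hi3 : IntegrableOn (fun x => f0 x * Kop d lam Δ x) (Icc (-lam) lam) :=
    hint f0 hf0m hf0n _ hKΔm hKΔn
  have hi4 : IntegrableOn (fun x => Δ x * Kop d lam Δ x) (Icc (-lam) lam) :=
    hint Δ hΔm hΔn _ hKΔm hKΔn
  have hiphi : ∀ (u : ℝ → ℝ), Measurable u → (∀ x, u x ∈ Icc (0:ℝ) 1) →
      IntegrableOn (fun x => phi (u x)) (Icc (-lam) lam) := by
    intro u hu hub
    exact intOn_of_bdd measurableSet_Icc measure_Icc_lt_top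
      ((continuous_phi.measurable.comp hu).aemeasurable) 2 (fun x _ => norm_phi_le (hub x))
  have hiphif0 := hiphi f0 hf0m hf0b
  have hiphih := hiphi h hhm hhb
  set Qff : ℝ := ∫ x in Icc (-lam) lam, f0 x * Kop d lam f0 x with hQff
  set Qd : ℝ := ∫ x in Icc (-lam) lam, Δ x * Kop d lam f0 x with hQd
  set Qdd : ℝ := ∫ x in Icc (-lam) lam, Δ x * Kop d lam Δ x with hQdd
  set Sf : ℝ := ∫ x in Icc (-lam) lam, phi (f0 x) with hSf
  set Sh : ℝ := ∫ x in Icc (-lam) lam, phi (h x) with hSh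
  have hstep : ∀ t : ℝ, 0 < t → t ≤ 1 → 0 ≤ (d * Qd + Sh - Sf) + t * (d/2 * Qdd) := by
    intro t ht0 ht1
    set gt : ℝ → ℝ := fun x => f0 x + t * Δ x with hgt
    have hgtmem : memG gt := by
      constructor
      · intro x1 x2 hx
        have h1 := hf0.1 hx
        have h2 := hmemh.1 hx
        simp only [hgt, hΔ]
        nlinarith
      · intro x
        have h1 := hf0b x; have h2 := hhb x
        constructor
        · simp only [hgt, hΔ]; nlinarith [h1.1, h2.1, h1.2]
        · simp only [hgt, hΔ]; nlinarith [h1.2, h2.2, h1.1]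
    have hgtm := hgtmem.meas
    have hgtb := hgtmem.2
    have htΔn : ∀ y, ‖t * Δ y‖ ≤ 1 := by
      intro y
      rw [norm_mul]
      calc ‖t‖ * ‖Δ y‖ ≤ 1 * 1 := by
            refine mul_le_mul ?_ (hΔn y) (norm_nonneg _) zero_le_one
            rw [Real.norm_eq_abs, abs_of_pos ht0]; exact ht1
        _ = 1 := one_mul 1
    have hKgt : ∀ x, Kop d lam gt x = Kop d lam f0 x + t * Kop d lam Δ x := by
      intro x
      have e1 : Kop d lam gt x = Kop d lam f0 x + Kop d lam (fun y => t * Δ y) x := by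
        rw [hgt]
        exact Kop_add hd hf0m hf0n (measurable_const.mul hΔm) htΔn x
      rw [e1, Kop_smul hd hΔm hΔn t x]
    have hquad2 : (∫ x in Icc (-lam) lam, gt x * Kop d lam gt x)
        = Qff + 2*t*Qd + t^2*Qdd := by
      have e2 : ∀ x ∈ Icc (-lam) lam, gt x * Kop d lam gt x
          = f0 x * Kop d lam f0 x + t * (Δ x * Kop d lam f0 x + f0 x * Kop d lam Δ x)
            + t^2 * (Δ x * Kop d lam Δ x) := by
        intro x _
        rw [hKgt x]
        simp only [hgt]
        ring
      have hiM : IntegrableOn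
          (fun x => Δ x * Kop d lam f0 x + f0 x * Kop d lam Δ x) (Icc (-lam) lam) :=
        hi2.add hi3
      have hiMt : IntegrableOn
          (fun x => t * (Δ x * Kop d lam f0 x + f0 x * Kop d lam Δ x)) (Icc (-lam) lam) :=
        hiM.const_mul t
      have hiL : IntegrableOn
          (fun x => f0 x * Kop d lam f0 x
            + t * (Δ x * Kop d lam f0 x + f0 x * Kop d lam Δ x)) (Icc (-lam) lam) :=
        hi1.add hiMt
      have hiR : IntegrableOn
          (fun x => t^2 * (Δ x * Kop d lam Δ x)) (Icc (-lam) lam) := hi4.const_mul (t^2)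
      rw [setIntegral_congr_fun measurableSet_Icc e2]
      rw [integral_add hiL hiR]
      rw [integral_add hi1 hiMt]
      rw [integral_const_mul, integral_const_mul]
      rw [integral_add hi2 hi3]
      rw [Q_symm hd hlam hf0m hf0n hΔm hΔn]
      rw [← hQff, ← hQd, ← hQdd]
      ring
    have hent : (∫ x in Icc (-lam) lam, phi (gt x)) ≤ Sf + t * (Sh - Sf) := by
      have e3 : (∫ x in Icc (-lam) lam, phi (gt x))
          ≤ ∫ x in Icc (-lam) lam, (phi (f0 x) + t * (phi (h x) - phi (f0 x))) := by
        refine setIntegral_mono_on (hiphi gt hgtm hgtb)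
          (hiphif0.add ((hiphih.sub hiphif0).const_mul t)) measurableSet_Icc (fun x _ => ?_)
        have hc := phi_convex (hf0b x) (hhb x) ⟨ht0.le, ht1⟩
        simp only [hgt, hΔ]
        exact hc
      have hiS : IntegrableOn (fun x => phi (h x) - phi (f0 x)) (Icc (-lam) lam) :=
        hiphih.sub hiphif0
      have hiSt : IntegrableOn (fun x => t * (phi (h x) - phi (f0 x))) (Icc (-lam) lam) :=
        hiS.const_mul t
      rw [integral_add hiphif0 hiSt, integral_const_mul,
        integral_sub hiphih hiphif0, ← hSf, ← hSh] at e3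
      exact e3
    have hEg' : d/2 * Qff + Sf ≤ d/2 * (Qff + 2*t*Qd + t^2*Qdd)
        + ∫ x in Icc (-lam) lam, phi (gt x) := by
      have hm := hmin gt hgtmem
      unfold En at hm
      rw [hquad2, ← hQff, ← hSf] at hm
      exact hm
    by_contra hcon
    push_neg at hcon
    have hpos := mul_pos ht0 (show 0 < -((d * Qd + Sh - Sf) + t * (d/2 * Qdd)) by linarith)
    nlinarith [hEg', hent, hpos]
  have hA0 : 0 ≤ d * Qd + Sh - Sf := by
    by_contra hcon
    push_neg at hcon
    set C : ℝ := d/2 * Qdd with hC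
    have habs : (0:ℝ) ≤ |C| := abs_nonneg C
    have hApos : 0 < -(d * Qd + Sh - Sf) := by linarith
    set t : ℝ := min 1 (-(d * Qd + Sh - Sf) / (2*(|C|+1))) with ht
    have ht0 : 0 < t := lt_min one_pos (by positivity)
    have ht1 : t ≤ 1 := min_le_left _ _
    have h1 := hstep t ht0 ht1
    have h2 : t ≤ -(d * Qd + Sh - Sf) / (2*(|C|+1)) := min_le_right _ _
    have h3 : t * C ≤ t * |C| := mul_le_mul_of_nonneg_left (le_abs_self C) ht0.le
    have h4 : t * |C| ≤ (-(d * Qd + Sh - Sf) / (2*(|C|+1))) * |C| :=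
      mul_le_mul_of_nonneg_right h2 habs
    have h5 : (-(d * Qd + Sh - Sf) / (2*(|C|+1))) * |C| < -(d * Qd + Sh - Sf) := by
      rw [div_mul_eq_mul_div, div_lt_iff₀ (by positivity)]
      nlinarith
    linarith
  set Gf : ℝ → ℝ := fun x => d * (Δ x * Kop d lam f0 x) + (phi (h x) - phi (f0 x)) with hGf
  have hiS : IntegrableOn (fun x => phi (h x) - phi (f0 x)) (Icc (-lam) lam) :=
    hiphih.sub hiphif0
  have hi2d : IntegrableOn (fun x => d * (Δ x * Kop d lam f0 x)) (Icc (-lam) lam) :=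
    hi2.const_mul d
  have hGfint : IntegrableOn Gf (Icc (-lam) lam) := hi2d.add hiS
  have hGfeq : (∫ x in Icc (-lam) lam, Gf x) = d * Qd + Sh - Sf := by
    rw [hGf]
    rw [integral_add hi2d hiS, integral_const_mul,
      integral_sub hiphih hiphif0, ← hQd, ← hSh, ← hSf]
    ring
  have hGrepr : ∀ x, Gf x = -(d * Kop d lam f0 x * f0 x)
      - Real.exp (-(d * Kop d lam f0 x)) - f0 x * Real.log (f0 x) + f0 x := by
    intro x
    simp only [hGf, hΔ, hh, phi, Real.log_exp]
    ring
  have hGle : ∀ x, Gf x ≤ 0 := by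
    intro x
    rw [hGrepr x]
    have hu0 : 0 ≤ d * Kop d lam f0 x := mul_nonneg hd0.le (hK0 x)
    have ha01 := hf0b x
    rcases eq_or_lt_of_le ha01.1 with h0 | hpos
    · rw [← h0]
      nlinarith [Real.exp_pos (-(d * Kop d lam f0 x))]
    · have hkey : f0 x * Real.exp (-(d * Kop d lam f0 x) - Real.log (f0 x))
          = Real.exp (-(d * Kop d lam f0 x)) := by
        rw [Real.exp_sub, Real.exp_log hpos]
        field_simp
      have hexp := Real.add_one_le_exp (-(d * Kop d lam f0 x) - Real.log (f0 x))
      have hmul := mul_le_mul_of_nonneg_left hexp hpos.le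
      rw [hkey] at hmul
      nlinarith [hmul]
  have hA' : 0 ≤ ∫ x in Icc (-lam) lam, Gf x := hGfeq ▸ hA0
  have hneg : 0 ≤ᵐ[volume.restrict (Icc (-lam) lam)] (fun x => -Gf x) :=
    Eventually.of_forall (fun x => neg_nonneg.2 (hGle x))
  have hzero : (∫ x in Icc (-lam) lam, -Gf x) = 0 := by
    have h1 : (∫ x in Icc (-lam) lam, -Gf x) = - ∫ x in Icc (-lam) lam, Gf x := integral_neg _
    have h2 : 0 ≤ ∫ x in Icc (-lam) lam, -Gf x := integral_nonneg_of_ae hneg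
    linarith
  have haezero : (fun x => -Gf x) =ᵐ[volume.restrict (Icc (-lam) lam)] 0 :=
    (integral_eq_zero_iff_of_nonneg_ae hneg hGfint.neg).1 hzero
  refine haezero.mono (fun x hx => ?_)
  have hGx0 : Gf x = 0 := by
    have : -Gf x = 0 := hx
    linarith
  have hR : -(d * Kop d lam f0 x * f0 x) - Real.exp (-(d * Kop d lam f0 x))
      - f0 x * Real.log (f0 x) + f0 x = 0 := by
    rw [← hGrepr x]; exact hGx0
  have ha01 := hf0b x
  rcases eq_or_lt_of_le ha01.1 with h0 | hpos
  · exfalso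
    rw [← h0] at hR
    nlinarith [Real.exp_pos (-(d * Kop d lam f0 x)), hR]
  · have hkey : f0 x * Real.exp (-(d * Kop d lam f0 x) - Real.log (f0 x))
        = Real.exp (-(d * Kop d lam f0 x)) := by
      rw [Real.exp_sub, Real.exp_log hpos]
      field_simp
    have e1 : f0 x * ((-(d * Kop d lam f0 x) - Real.log (f0 x)) + 1)
        = f0 x * Real.exp (-(d * Kop d lam f0 x) - Real.log (f0 x)) := by
      rw [hkey]
      linear_combination hR
    have e2 : (-(d * Kop d lam f0 x) - Real.log (f0 x)) + 1
        = Real.exp (-(d * Kop d lam f0 x) - Real.log (f0 x)) :=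
      mul_left_cancel₀ (ne_of_gt hpos) e1
    have hz : -(d * Kop d lam f0 x) - Real.log (f0 x) = 0 := by
      by_contra hzz
      have := Real.add_one_lt_exp hzz
      linarith
    have hlog : Real.log (f0 x) = -(d * Kop d lam f0 x) := by linarith
    calc f0 x = Real.exp (Real.log (f0 x)) := (Real.exp_log hpos).symm
      _ = Real.exp (-(d * Kop d lam f0 x)) := by rw [hlog]

end Lemmas

end TCav

open TCav

/-- existence of a fixed point of the truncated cavity operator. -/
theorem truncated_cavity_exists_fixedPoint (d lam : ℝ) (hd : 1 < d) (hlam : 0 < lam) :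
    ∃ f : ℝ → ℝ, memF lam f ∧ ∀ x ∈ Icc (-lam) lam, T d lam f x = f x := by
  obtain ⟨f0, hf0, hmin⟩ := exists_min hd hlam
  have hae := el hd hlam hf0 hmin
  have hd0 : (0:ℝ) < d := by linarith
  set h : ℝ → ℝ := fun x => Real.exp (-(d * Kop d lam f0 x)) with hh
  have hKmono := Kop_mono (d := d) (lam := lam) hd hf0.meas hf0.2
  have hK0 : ∀ x, 0 ≤ Kop d lam f0 x := Kop_nonneg hd (fun y => (hf0.2 y).1)
  have hmemh : memG h := by
    constructor
    · intro x1 x2 hx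
      exact Real.exp_le_exp.2 (neg_le_neg (mul_le_mul_of_nonneg_left (hKmono hx) hd0.le))
    · intro x
      refine ⟨(Real.exp_pos _).le, ?_⟩
      calc Real.exp (-(d * Kop d lam f0 x)) ≤ Real.exp 0 :=
            Real.exp_le_exp.2 (by nlinarith [hK0 x])
        _ = 1 := Real.exp_zero
  refine ⟨h, ⟨hmemh.1.antitoneOn _, fun x _ => hmemh.2 x⟩, fun x hx => ?_⟩
  have hx1 : -lam ≤ x := hx.1
  have hx2 : x ≤ lam := hx.2
  have hxle : -x ≤ lam := by linarith
  have hIoc_sub : Ioc (-x) lam ⊆ Icc (-lam) lam := by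
    intro y hy
    exact ⟨by linarith [hy.1], hy.2⟩
  have haeIoc : ∀ᵐ y ∂(volume.restrict (Ioc (-x) lam)), f0 y = h y :=
    ae_restrict_of_ae_restrict_of_subset hIoc_sub hae
  have step1 : (∫ y in (-x)..lam, (x + y) ^ (d - 1) * h y)
      = ∫ y in Ioc (-x) lam, (x+y)^(d-1) * h y := intervalIntegral.integral_of_le hxle
  have step2 : (∫ y in Ioc (-x) lam, (x+y)^(d-1) * h y)
      = ∫ y in Ioc (-x) lam, ker d x y * h y := by
    refine setIntegral_congr_fun measurableSet_Ioc (fun y hy => ?_)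
    unfold ker
    rw [if_pos (by linarith [hy.1] : 0 < x + y)]
  have step3 : (∫ y in Ioc (-x) lam, ker d x y * h y)
      = ∫ y in Ioc (-x) lam, ker d x y * f0 y := by
    refine integral_congr_ae (haeIoc.mono (fun y hy => ?_))
    show ker d x y * h y = ker d x y * f0 y
    rw [hy]
  have hmeasS : MeasurableSet {y : ℝ | 0 < x + y} := by
    have he : {y : ℝ | 0 < x + y} = Ioi (-x) := by
      ext y
      simp only [mem_setOf_eq, mem_Ioi]
      constructor <;> intro hyy <;> linarith
    rw [he]
    exact measurableSet_Ioi
  have step4 : (∫ y in Ioc (-x) lam, ker d x y * f0 y) = Kop d lam f0 x := by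
    have hsets : Icc (-lam) lam ∩ {y : ℝ | 0 < x + y} = Ioc (-x) lam := by
      ext y
      simp only [mem_inter_iff, mem_Icc, mem_setOf_eq, mem_Ioc]
      constructor
      · rintro ⟨⟨_, hb⟩, hc⟩
        exact ⟨by linarith, hb⟩
      · rintro ⟨ha, hb⟩
        exact ⟨⟨by linarith, hb⟩, by linarith⟩
    have hind : ∀ y, ker d x y * f0 y
        = indicator {y : ℝ | 0 < x + y} (fun y => ker d x y * f0 y) y := by
      intro y
      by_cases hy : y ∈ {y : ℝ | 0 < x + y}
      · rw [indicator_of_mem hy]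
      · rw [indicator_of_notMem hy]
        unfold ker
        rw [if_neg (by exact hy : ¬ 0 < x + y), zero_mul]
    calc ∫ y in Ioc (-x) lam, ker d x y * f0 y
        = ∫ y in Icc (-lam) lam ∩ {y : ℝ | 0 < x + y}, ker d x y * f0 y := by rw [hsets]
      _ = ∫ y in Icc (-lam) lam,
            indicator {y : ℝ | 0 < x + y} (fun y => ker d x y * f0 y) y :=
          (setIntegral_indicator hmeasS).symm
      _ = Kop d lam f0 x :=
          setIntegral_congr_fun measurableSet_Icc (fun y _ => (hind y).symm)
  show Real.exp (-(d * ∫ y in (-x)..lam, (x + y) ^ (d - 1) * h y)) = h x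
  rw [step1, step2, step3, step4]
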